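/- Let Φ₁, Φ₂ be matrices and t₁, t₂ nonzero vectors. Vectors w₁, w₂ satisfy (Φ₁ ⊗ Φ₂)(w₁ ⊗ w₂) = t₁ ⊗ t₂ if and only if there exists a nonzero scalar α such that Φ₁ w₁ = α t₁ and Φ₂ w₂ = α⁻¹ t₂. -/

import Mathlib

open Matrix Kronecker

lemma kron_mulVec_factor {m₁ n₁ m₂ n₂ : ℕ}
    (A : Matrix (Fin m₁) (Fin n₁) ℂ) (B : Matrix (Fin m₂) (Fin n₂) ℂ)
    (x : Fin n₁ → ℂ) (y : Fin n₂ → ℂ) (p : Fin m₁ × Fin m₂) :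
    (A ⊗ₖ B).mulVec (fun q => x q.1 * y q.2) p = A.mulVec x p.1 * B.mulVec y p.2 := by
  simp only [Matrix.mulVec, dotProduct, Matrix.kroneckerMap_apply]
  rw [Finset.sum_mul_sum, Fintype.sum_prod_type]
  refine Finset.sum_congr rfl fun a _ => Finset.sum_congr rfl fun b _ => ?_
  ring

/-- `(Φ₁ ⊗ Φ₂)(w₁ ⊗ w₂) = t₁ ⊗ t₂` (with `t₁, t₂ ≠ 0`) holds iff there is a nonzero scalar `α`
with `Φ₁ w₁ = α t₁` and `Φ₂ w₂ = α⁻¹ t₂`. -/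
theorem stmt2 {m₁ n₁ m₂ n₂ : ℕ}
    (Φ₁ : Matrix (Fin m₁) (Fin n₁) ℂ) (Φ₂ : Matrix (Fin m₂) (Fin n₂) ℂ)
    (w₁ : Fin n₁ → ℂ) (w₂ : Fin n₂ → ℂ) (t₁ : Fin m₁ → ℂ) (t₂ : Fin m₂ → ℂ)
    (ht₁ : t₁ ≠ 0) (ht₂ : t₂ ≠ 0) :
    ((Φ₁ ⊗ₖ Φ₂).mulVec (fun p => w₁ p.1 * w₂ p.2) = fun p => t₁ p.1 * t₂ p.2) ↔
      ∃ α : ℂ, α ≠ 0 ∧ Φ₁.mulVec w₁ = α • t₁ ∧ Φ₂.mulVec w₂ = α⁻¹ • t₂ := by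
  set u := Φ₁.mulVec w₁ with hu
  set v := Φ₂.mulVec w₂ with hv
  have key : ((Φ₁ ⊗ₖ Φ₂).mulVec (fun p => w₁ p.1 * w₂ p.2) = fun p => t₁ p.1 * t₂ p.2) ↔
      ∀ i j, u i * v j = t₁ i * t₂ j := by
    constructor
    · intro h i j
      have := congrFun h (i, j)
      rwa [kron_mulVec_factor] at this
    · intro h
      funext p
      rw [kron_mulVec_factor]
      exact h p.1 p.2
  rw [key]
  constructor
  · intro h
    obtain ⟨i, hi⟩ : ∃ i, t₁ i ≠ 0 := by
      by_contra hc; push_neg at hc; exact ht₁ (funext hc)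
    obtain ⟨j, hj⟩ : ∃ j, t₂ j ≠ 0 := by
      by_contra hc; push_neg at hc; exact ht₂ (funext hc)
    have huv : u i * v j = t₁ i * t₂ j := h i j
    have hui : u i ≠ 0 := by
      intro h0; rw [h0, zero_mul] at huv; exact (mul_ne_zero hi hj) huv.symm
    refine ⟨u i / t₁ i, div_ne_zero hui hi, ?_, ?_⟩
    · funext k
      have hk := h k j
      have h1 : u k * t₁ i * t₂ j = u i * t₁ k * t₂ j := by
        calc u k * t₁ i * t₂ j = u k * (t₁ i * t₂ j) := by ring
        _ = u k * (u i * v j) := by rw [huv]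
        _ = u i * (u k * v j) := by ring
        _ = u i * (t₁ k * t₂ j) := by rw [hk]
        _ = u i * t₁ k * t₂ j := by ring
      have h2 : u k * t₁ i = u i * t₁ k := mul_right_cancel₀ hj h1
      rw [Pi.smul_apply, smul_eq_mul, div_mul_eq_mul_div, eq_div_iff hi]
      linear_combination h2
    · funext l
      have hl := h i l
      rw [Pi.smul_apply, smul_eq_mul, inv_div, div_mul_eq_mul_div, eq_div_iff hui]
      linear_combination hl
  · rintro ⟨α, hα, h1, h2⟩ i j
    rw [h1, h2]
    simp only [Pi.smul_apply, smul_eq_mul]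
    field_simp
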